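/- Let X be a compact zero-dimensional space, let G ≤ Homeo(X) be micro-supported, and let Y be a regular closed subset of X (Y closed with dense interior). Then the setwise stabiliser G_Y equals the normaliser in G of rist_G(Y). Consequently, in any Hausdorff group topology on G, G_Y is a closed subgroup. -/

import Mathlib

variable {X : Type*} [TopologicalSpace X]

/-- The group of self-homeomorphisms of `X` under composition. -/
instance : Group (X ≃ₜ X) where
  mul f g := g.trans f
  one := Homeomorph.refl X
  inv := Homeomorph.symm
  mul_assoc _ _ _ := Homeomorph.ext fun _ => rfl
  one_mul _ := Homeomorph.ext fun _ => rfl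
  mul_one _ := Homeomorph.ext fun _ => rfl
  inv_mul_cancel a := Homeomorph.ext fun x => a.symm_apply_apply x

/-- The rigid stabiliser of `Y`: elements of `G` fixing the complement of `Y` pointwise. -/
def rist (G : Subgroup (X ≃ₜ X)) (Y : Set X) : Set (X ≃ₜ X) :=
  {g | g ∈ G ∧ ∀ x ∉ Y, g x = x}

/-- `G` is micro-supported: the rigid stabiliser of every nonempty open set is non-trivial. -/
def IsMicroSupported (G : Subgroup (X ≃ₜ X)) : Prop :=
  ∀ U : Set X, IsOpen U → U.Nonempty → ∃ g ∈ rist G U, g ≠ 1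

lemma hmul_apply (f g : X ≃ₜ X) (x : X) : (f * g) x = f (g x) := rfl

lemma moved_iterate {a : X ≃ₜ X} {x : X} (h : a x ≠ x) : a (a x) ≠ a x :=
  fun h' => h (a.injective h')

lemma commute_of_disjoint_support {a b : X ≃ₜ X}
    (h : ∀ x, a x = x ∨ b x = x) : a * b = b * a := by
  refine Homeomorph.ext fun x => ?_
  show a (b x) = b (a x)
  by_cases hb : b x = x
  · rw [hb]
    by_cases ha : a x = x
    · rw [ha, hb]
    · have h2 : b (a x) = a x := (h (a x)).resolve_left (moved_iterate ha)
      rw [h2]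
  · have ha : a x = x := (h x).resolve_right hb
    have h2 : a (b x) = b x := (h (b x)).resolve_right (moved_iterate hb)
    rw [ha, h2]

lemma comm_of_rist_mem {G : Subgroup (X ≃ₜ X)} {Y : Set X} {a s : X ≃ₜ X}
    (ha : a ∈ rist G Y) (hs : s ∈ rist G Yᶜ) : a * s = s * a :=
  commute_of_disjoint_support fun x => by
    by_cases hx : x ∈ Y
    · exact Or.inr (hs.2 x (not_not_intro hx))
    · exact Or.inl (ha.2 x hx)

lemma conj_mem_rist {G : Subgroup (X ≃ₜ X)} {Y : Set X} {g : X ≃ₜ X}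
    (hgG : g ∈ G) (hgY : (⇑g) '' Y ⊆ Y) {r : X ≃ₜ X} (hr : r ∈ rist G Y) :
    g * r * g⁻¹ ∈ rist G Y := by
  refine ⟨mul_mem (mul_mem hgG hr.1) (inv_mem hgG), fun x hx => ?_⟩
  have hsx : g.symm x ∉ Y := fun h => hx (hgY ⟨g.symm x, h, g.apply_symm_apply x⟩)
  show g (r (g.symm x)) = x
  rw [hr.2 _ hsx, g.apply_symm_apply]

lemma comm_of_image_subset {G : Subgroup (X ≃ₜ X)} {Y : Set X} {g : X ≃ₜ X}
    (hgG : g ∈ G) (hgY : (⇑g) '' Y ⊆ Y) {r s : X ≃ₜ X}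
    (hr : r ∈ rist G Y) (hs : s ∈ rist G Yᶜ) :
    (g * r * g⁻¹) * s = s * (g * r * g⁻¹) :=
  comm_of_rist_mem (conj_mem_rist hgG hgY hr) hs

lemma image_subset_of_comm [T2Space X] {G : Subgroup (X ≃ₜ X)}
    (hms : IsMicroSupported G) {Y : Set X} (hY : Y = closure (interior Y))
    {g : X ≃ₜ X}
    (hc : ∀ r ∈ rist G Y, ∀ s ∈ rist G Yᶜ, (g * r * g⁻¹) * s = s * (g * r * g⁻¹)) :
    (⇑g) '' Y ⊆ Y := by
  by_contra hsub
  obtain ⟨x₀, hx₀, hx₀'⟩ := Set.not_subset.mp hsub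
  have hgY : (⇑g) '' Y = closure (interior ((⇑g) '' Y)) := by
    conv_lhs => rw [hY]
    rw [g.image_closure, g.image_interior]
  have hx₀c : x₀ ∈ closure (interior ((⇑g) '' Y)) := hgY ▸ hx₀
  have hYc : IsClosed Y := by rw [hY]; exact isClosed_closure
  obtain ⟨u, huC, huI⟩ := mem_closure_iff.mp hx₀c Yᶜ hYc.isOpen_compl hx₀'
  set U : Set X := Yᶜ ∩ interior ((⇑g) '' Y) with hU
  have hUo : IsOpen U := hYc.isOpen_compl.inter isOpen_interior
  have hUne : U.Nonempty := ⟨u, huC, huI⟩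
  have hUgY : U ⊆ (⇑g) '' Y := fun x hx => interior_subset hx.2
  set W : Set X := (⇑g) ⁻¹' U with hW
  have hWo : IsOpen W := hUo.preimage g.continuous
  have hWne : W.Nonempty := ⟨g.symm u, by
    show g (g.symm u) ∈ U
    rw [g.apply_symm_apply]; exact ⟨huC, huI⟩⟩
  have hWY : W ⊆ Y := by
    intro x hx
    obtain ⟨y, hy, hyx⟩ := hUgY hx
    rwa [← g.injective hyx]
  obtain ⟨t, htW, ht1⟩ := hms W hWo hWne
  have htY : t ∈ rist G Y := ⟨htW.1, fun x hx => htW.2 x (fun h => hx (hWY h))⟩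
  set a : X ≃ₜ X := g * t * g⁻¹ with ha
  have ha_supp : ∀ x ∉ U, a x = x := by
    intro x hx
    have hsx : g.symm x ∉ W := fun h => hx (by simpa [hW] using h)
    show g (t (g.symm x)) = x
    rw [htW.2 _ hsx, g.apply_symm_apply]
  have ha1 : a ≠ 1 := by
    intro h
    apply ht1
    have h2 : t = g⁻¹ * a * g := by rw [ha]; group
    rw [h] at h2
    rw [h2]; group
  obtain ⟨x₁, hx₁⟩ : ∃ x, a x ≠ x := by
    by_contra h
    push_neg at h
    exact ha1 (Homeomorph.ext h)
  have hx₁U : x₁ ∈ U := by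
    by_contra h
    exact hx₁ (ha_supp x₁ h)
  obtain ⟨V, W₂, hVo, hW₂o, hxV, haxW₂, hdisj⟩ := t2_separation (Ne.symm hx₁)
  set V' : Set X := V ∩ U ∩ (⇑a) ⁻¹' W₂ with hV'
  have hV'o : IsOpen V' := (hVo.inter hUo).inter (hW₂o.preimage a.continuous)
  have hV'ne : V'.Nonempty := ⟨x₁, ⟨hxV, hx₁U⟩, haxW₂⟩
  obtain ⟨s, hsV', hs1⟩ := hms V' hV'o hV'ne
  have hsYc : s ∈ rist G Yᶜ :=
    ⟨hsV'.1, fun x hx => hsV'.2 x (fun h => hx h.1.2.1)⟩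
  have hcomm : a * s = s * a := hc t htY s hsYc
  obtain ⟨y, hy⟩ : ∃ y, s y ≠ y := by
    by_contra h
    push_neg at h
    exact hs1 (Homeomorph.ext h)
  have hyV' : y ∈ V' := by
    by_contra h
    exact hy (hsV'.2 y h)
  have hayW₂ : a y ∈ W₂ := hyV'.2
  have hayV' : a y ∉ V' := fun h => Set.disjoint_left.mp hdisj h.1.1 hayW₂
  have h1 : a (s y) = s (a y) := by
    have h0 := congrArg (fun f : X ≃ₜ X => f y) hcomm
    simpa [hmul_apply] using h0
  have h2 : s (a y) = a y := hsV'.2 _ hayV'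
  rw [h2] at h1
  exact hy (a.injective h1)

lemma inv_image_eq {g : X ≃ₜ X} {Y : Set X} (h : (⇑g) '' Y = Y) :
    (⇑g⁻¹) '' Y = Y := by
  conv_lhs => rw [← h]
  exact g.symm_image_image Y

lemma image_eq_of_subsets {g : X ≃ₜ X} {Y : Set X}
    (h1 : (⇑g) '' Y ⊆ Y) (h2 : (⇑g⁻¹) '' Y ⊆ Y) : (⇑g) '' Y = Y :=
  Set.Subset.antisymm h1
    (fun y hy => ⟨g.symm y, h2 ⟨y, hy, rfl⟩, g.apply_symm_apply y⟩)

/-- **Setwise stabilisers of regular closed sets are normalisers of rigid stabilisers, and are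
closed in any Hausdorff group topology.**
Let `X` be a compact zero-dimensional space, `G ≤ Homeo(X)` micro-supported and `Y ⊆ X`
regular closed (i.e. `Y` is the closure of its interior).  Then the setwise stabiliser `G_Y`
is the normaliser in `G` of `rist_G(Y)`; consequently, for any Hausdorff group topology on
`G`, the setwise stabiliser `G_Y` is a closed subgroup. -/
theorem setwise_stabiliser_eq_normalizer_of_rist
    [CompactSpace X] [T2Space X] [TotallyDisconnectedSpace X]
    (G : Subgroup (X ≃ₜ X)) (hms : IsMicroSupported G)
    (Y : Set X) (hY : Y = closure (interior Y)) :
    ({g | g ∈ G ∧ (⇑g) '' Y = Y}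
        = {g | g ∈ G ∧ ∀ r : X ≃ₜ X, r ∈ rist G Y ↔ g * r * g⁻¹ ∈ rist G Y}) ∧
    (∀ τ : TopologicalSpace G, @IsTopologicalGroup G τ _ → @T2Space G τ →
      @IsClosed G τ {g : G | (⇑(g : X ≃ₜ X)) '' Y = Y}) := by
  constructor
  · ext g
    simp only [Set.mem_setOf_eq]
    constructor
    · rintro ⟨hgG, hgY⟩
      refine ⟨hgG, fun r => ⟨fun hr => conj_mem_rist hgG hgY.subset hr, fun hr => ?_⟩⟩
      have hinv : (⇑g⁻¹) '' Y = Y := inv_image_eq hgY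
      have h := conj_mem_rist (inv_mem hgG) hinv.subset hr
      have heq : g⁻¹ * (g * r * g⁻¹) * g⁻¹⁻¹ = r := by group
      rwa [heq] at h
    · rintro ⟨hgG, hn⟩
      refine ⟨hgG, ?_⟩
      have h1 : (⇑g) '' Y ⊆ Y :=
        image_subset_of_comm hms hY (fun r hr s hs => comm_of_rist_mem ((hn r).mp hr) hs)
      have h2 : (⇑g⁻¹) '' Y ⊆ Y := by
        apply image_subset_of_comm hms hY
        intro r hr s hs
        have hr3 : g⁻¹ * r * g⁻¹⁻¹ ∈ rist G Y := by
          rw [inv_inv]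
          apply (hn (g⁻¹ * r * g)).mpr
          have heq : g * (g⁻¹ * r * g) * g⁻¹ = r := by group
          rw [heq]; exact hr
        exact comm_of_rist_mem hr3 hs
      exact image_eq_of_subsets h1 h2
  · intro τ hτ1 hτ2
    haveI := hτ1
    haveI := hτ2
    have key : ∀ g : G, (⇑(g : X ≃ₜ X)) '' Y = Y ↔
        ∀ r : G, (r : X ≃ₜ X) ∈ rist G Y → ∀ s : G, (s : X ≃ₜ X) ∈ rist G Yᶜ →
          (g * r * g⁻¹ * s = s * (g * r * g⁻¹) ∧
           g⁻¹ * r * g * s = s * (g⁻¹ * r * g)) := by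
      intro g
      constructor
      · intro hgY r hr s hs
        have hinv : (⇑(g : X ≃ₜ X)⁻¹) '' Y = Y := inv_image_eq hgY
        constructor
        · apply Subtype.ext
          push_cast
          exact comm_of_image_subset g.2 hgY.subset hr hs
        · apply Subtype.ext
          push_cast
          have h := comm_of_image_subset (inv_mem g.2) hinv.subset hr hs
          simpa [inv_inv] using h
      · intro hcs
        apply image_eq_of_subsets
        · apply image_subset_of_comm hms hY
          intro r hr s hs
          have h := (hcs ⟨r, hr.1⟩ hr ⟨s, hs.1⟩ hs).1
          have h2 := congrArg (Subtype.val) h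
          push_cast at h2
          exact h2
        · apply image_subset_of_comm hms hY
          intro r hr s hs
          have h := (hcs ⟨r, hr.1⟩ hr ⟨s, hs.1⟩ hs).2
          have h2 := congrArg (Subtype.val) h
          push_cast at h2
          rw [inv_inv]
          exact h2
    have hset : {g : G | (⇑(g : X ≃ₜ X)) '' Y = Y} =
        ⋂ (r : G) (_ : (r : X ≃ₜ X) ∈ rist G Y) (s : G) (_ : (s : X ≃ₜ X) ∈ rist G Yᶜ),
          ({g : G | g * r * g⁻¹ * s = s * (g * r * g⁻¹)} ∩
           {g : G | g⁻¹ * r * g * s = s * (g⁻¹ * r * g)}) := by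
      ext g
      simp only [Set.mem_setOf_eq, Set.mem_iInter, Set.mem_inter_iff]
      rw [key g]
    rw [hset]
    refine isClosed_iInter fun r => isClosed_iInter fun hr =>
      isClosed_iInter fun s => isClosed_iInter fun hs => IsClosed.inter ?_ ?_
    · exact isClosed_eq (by fun_prop) (by fun_prop)
    · exact isClosed_eq (by fun_prop) (by fun_prop)
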